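/- Let Δt > 0, a_brake > 0, a_max > 0 be real numbers and let I be a nonempty finite index set of leading vehicle objects with maximum braking rates a_brake_i ≥ a_brake. Let v_e : ℕ → ℝ (ego speed), and for each i ∈ I let d_i : ℕ → ℝ (distance), v_i : ℕ → ℝ (object speed), and a_i : ℕ → ℝ (object acceleration) be sequences satisfying, for every n: v_i(n) ≥ 0, a_i(n) ≥ −a_brake_i, v_i(n+1) = v_i(n) + a_i(n)·Δt ≥ 0, the ego applies the controller command a(n) = min(a_max, (v_max(n) − a_brake·Δt − v_e(n))/Δt) with v_max(n) = min over i of sqrt(2·a_brake·(d_i(n) + v_i(n)²/(2·a_brake_i))), v_e(n+1) = v_e(n) + a(n)·Δt ≥ 0, and d_i(n+1) = d_i(n) + (v_i(n)·Δt + (1/2)·a_i(n)·Δt²) − (v_e(n)·Δt + (1/2)·a(n)·Δt²). Assume at time 0: v_e(0) ≥ 0 and, for every i ∈ I, d_i(0) ≥ 0 and max(0, v_e(0)²/(2·a_brake) − v_i(0)²/(2·a_brake_i)) ≤ d_i(0). Then for every n ∈ ℕ and every i ∈ I: d_i(n) ≥ 0 and max(0, v_e(n)²/(2·a_brake) − v_i(n)²/(2·a_brake_i))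 ≤ d_i(n), i.e., rules r1 (with ε = 0) and r2 have zero violation at every time step of the realization. -/

import Mathlib

set_option maxHeartbeats 1000000

lemma helperA (b bi t D w w' aio a u u' s : ℝ)
    (hb : 0 < b) (hbi : b ≤ bi) (ht : 0 < t)
    (hw : 0 ≤ w) (hw' : 0 ≤ w') (hweq : w' = w + aio * t)
    (hai : -bi ≤ aio) (haa : -b ≤ a)
    (hu'0 : 0 ≤ u') (hu'eq : u' = u + a * t)
    (hs2 : s ^ 2 * bi = 2 * b * D * bi + b * w ^ 2)
    (hub : u' + b * t ≤ s) :
    u' ^ 2 * bi ≤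
      2 * b * (D + (w * t + (1/2) * aio * t ^ 2) - (u * t + (1/2) * a * t ^ 2)) * bi
        + b * w' ^ 2 := by
  have hbi0 : 0 < bi := lt_of_lt_of_le hb hbi
  subst hweq
  have hueq : u = u' - a * t := by linarith
  subst hueq
  have h1 : u' ^ 2 ≤ (s - b * t) ^ 2 := by nlinarith
  have h1' : u' ^ 2 * bi ≤ (s - b * t) ^ 2 * bi :=
    mul_le_mul_of_nonneg_right h1 hbi0.le
  have h2 : 2 * b * t * (u' + b * t) * bi ≤ 2 * b * t * s * bi := by
    have h : 2 * b * t * (u' + b * t) ≤ 2 * b * t * s :=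
      mul_le_mul_of_nonneg_left hub (by positivity)
    exact mul_le_mul_of_nonneg_right h hbi0.le
  have h3 : 0 ≤ b * t * ((w + (w + aio * t)) * (bi + aio)) :=
    mul_nonneg (by positivity) (mul_nonneg (by linarith) (by linarith))
  have h4 : 0 ≤ b * t * t * bi * (a + b) := by
    have : 0 ≤ a + b := by linarith
    positivity
  nlinarith [h1', h2, hs2, h3, h4]

lemma helperB (b bi t D w w' aio a u u' s : ℝ)
    (hb : 0 < b) (hbi : b ≤ bi) (ht : 0 < t)
    (hD : 0 ≤ D) (hw : 0 ≤ w) (hw' : 0 ≤ w') (hweq : w' = w + aio * t)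
    (hai : -bi ≤ aio)
    (hu : 0 ≤ u) (hu'0 : 0 ≤ u') (hu'eq : u' = u + a * t)
    (hs0 : 0 ≤ s) (hs2 : s ^ 2 * bi = 2 * b * D * bi + b * w ^ 2)
    (hus : u ≤ s) (hub : u' + b * t ≤ s) :
    0 ≤ D + (w * t + (1/2) * aio * t ^ 2) - (u * t + (1/2) * a * t ^ 2) := by
  have hbi0 : 0 < bi := lt_of_lt_of_le hb hbi
  subst hweq
  have hueq : u' = u + a * t := hu'eq
  have hwm : 0 ≤ w * t + (1/2) * aio * t ^ 2 := by
    nlinarith [mul_nonneg (by linarith : (0:ℝ) ≤ w + (w + aio * t)) ht.le]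
  have hGbi : (s * t) ^ 2 * bi ≤ (D + (w * t + (1/2) * aio * t ^ 2) + (1/2) * b * t ^ 2) ^ 2 * bi := by
    have hs2t : s ^ 2 * bi * t ^ 2 = (2 * b * D * bi + b * w ^ 2) * t ^ 2 := by rw [hs2]
    rcases le_or_gt w (bi * t) with hcase | hcase
    · nlinarith [hs2t,
        mul_nonneg hbi0.le (sq_nonneg (D + w * t + (1/2) * aio * t ^ 2 - (1/2) * b * t ^ 2)),
        mul_nonneg (mul_nonneg (mul_nonneg hb.le (sq_nonneg t)) hw) (sub_nonneg.2 hcase),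
        mul_nonneg (mul_nonneg (mul_nonneg (mul_nonneg hb.le ht.le) (sq_nonneg t))
          (by linarith : (0:ℝ) ≤ w + aio * t)) hbi0.le]
    · have hwt : bi * t * t ≤ w * t := mul_le_mul_of_nonneg_right hcase.le ht.le
      have hKpos : 0 ≤ w * t - ((bi - b)/2) * t ^ 2 := by
        nlinarith [mul_nonneg (by linarith : (0:ℝ) ≤ bi + b) (sq_nonneg t)]
      have hKlb : w * t - ((bi - b)/2) * t ^ 2 ≤ w * t + (1/2) * aio * t ^ 2 + (1/2) * b * t ^ 2 := by
        nlinarith [mul_nonneg (by linarith : (0:ℝ) ≤ bi + aio) (sq_nonneg t)]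
      have hKbt : b * t ^ 2 ≤ w * t + (1/2) * aio * t ^ 2 + (1/2) * b * t ^ 2 := by
        nlinarith [mul_nonneg (by linarith : (0:ℝ) ≤ bi + aio) (sq_nonneg t),
          mul_nonneg (by linarith : (0:ℝ) ≤ bi - b) (sq_nonneg t)]
      have hsq : (w * t - ((bi - b)/2) * t ^ 2) * (w * t - ((bi - b)/2) * t ^ 2)
          ≤ (w * t + (1/2) * aio * t ^ 2 + (1/2) * b * t ^ 2) * (w * t + (1/2) * aio * t ^ 2 + (1/2) * b * t ^ 2) :=
        mul_le_mul hKlb hKlb hKpos (by linarith)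
      have hsq' := mul_le_mul_of_nonneg_left hsq hbi0.le
      have hK2 : b * w ^ 2 * t ^ 2 ≤ bi * (w * t + (1/2) * aio * t ^ 2 + (1/2) * b * t ^ 2) ^ 2 := by
        nlinarith [hsq',
          mul_nonneg (mul_nonneg (mul_nonneg (by linarith : (0:ℝ) ≤ (bi - b)/2) (sq_nonneg t)) hw)
            (by linarith : (0:ℝ) ≤ w - bi * t),
          mul_nonneg (mul_nonneg hbi0.le (sq_nonneg ((bi - b)/2))) (sq_nonneg (t ^ 2))]
      nlinarith [hs2t, hK2, mul_nonneg hbi0.le (sq_nonneg D),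
        mul_nonneg (mul_nonneg hbi0.le hD)
          (by linarith : (0:ℝ) ≤ w * t + (1/2) * aio * t ^ 2 + (1/2) * b * t ^ 2 - b * t ^ 2)]
  have hG : s * t ≤ D + (w * t + (1/2) * aio * t ^ 2) + (1/2) * b * t ^ 2 := by
    have h := le_of_mul_le_mul_right hGbi hbi0
    have hY0 : 0 ≤ D + (w * t + (1/2) * aio * t ^ 2) + (1/2) * b * t ^ 2 := by positivity
    calc s * t = Real.sqrt ((s * t) ^ 2) := (Real.sqrt_sq (mul_nonneg hs0 ht.le)).symm
      _ ≤ Real.sqrt ((D + (w * t + (1/2) * aio * t ^ 2) + (1/2) * b * t ^ 2) ^ 2) := Real.sqrt_le_sqrt h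
      _ = _ := Real.sqrt_sq hY0
  nlinarith [mul_le_mul_of_nonneg_right hus ht.le, mul_le_mul_of_nonneg_right hub ht.le]

set_option maxHeartbeats 1000000 in

/-- Multi-step invariance: iterating Lemma 1 along a realization, rules r1
(ε = 0) and r2 have zero violation at every time step, for leading vehicle
objects under the controller. -/
theorem r1_r2_invariant_along_realization
    {ι : Type*} (I : Finset ι) (hI : I.Nonempty)
    (Δt a_brake a_max : ℝ) (abi : ι → ℝ)
    (hdt : 0 < Δt) (hab : 0 < a_brake) (hamax : 0 < a_max)
    (habi : ∀ i ∈ I, a_brake ≤ abi i)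
    (ve a vmax : ℕ → ℝ) (d v ai : ι → ℕ → ℝ)
    -- object behavior: nonnegative speed, braking-limited acceleration, dynamics
    (hv : ∀ i ∈ I, ∀ n, 0 ≤ v i n)
    (hai : ∀ i ∈ I, ∀ n, -abi i ≤ ai i n)
    (hvdyn : ∀ i ∈ I, ∀ n, v i (n + 1) = v i n + ai i n * Δt)
    -- the controller command
    (hvmax : ∀ n, vmax n =
      I.inf' hI fun i => Real.sqrt (2 * a_brake * (d i n + v i n ^ 2 / (2 * abi i))))
    (ha : ∀ n, a n = min a_max ((vmax n - a_brake * Δt - ve n) / Δt))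
    -- ego dynamics
    (hvedyn : ∀ n, ve (n + 1) = ve n + a n * Δt)
    (hvepos : ∀ n, 0 ≤ ve (n + 1))
    -- distance dynamics
    (hddyn : ∀ i ∈ I, ∀ n, d i (n + 1) =
      d i n + (v i n * Δt + (1 / 2) * ai i n * Δt ^ 2)
        - (ve n * Δt + (1 / 2) * a n * Δt ^ 2))
    -- initial conditions: rules r1 and r2 hold at time 0
    (hve0 : 0 ≤ ve 0)
    (hd0 : ∀ i ∈ I, 0 ≤ d i 0)
    (hc0 : ∀ i ∈ I,
      max 0 (ve 0 ^ 2 / (2 * a_brake) - v i 0 ^ 2 / (2 * abi i)) ≤ d i 0) :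
    ∀ n, ∀ i ∈ I, 0 ≤ d i n ∧
      max 0 (ve n ^ 2 / (2 * a_brake) - v i n ^ 2 / (2 * abi i)) ≤ d i n := by
  have hveN : ∀ n, 0 ≤ ve n := by
    intro n; cases n with
    | zero => exact hve0
    | succ m => exact hvepos m
  have habi0 : ∀ i ∈ I, 0 < abi i := fun i hi => lt_of_lt_of_le hab (habi i hi)
  -- key invariant in polynomial form
  have key : ∀ n, ∀ i ∈ I, 0 ≤ d i n ∧
      ve n ^ 2 ≤ 2 * a_brake * (d i n + v i n ^ 2 / (2 * abi i)) := by
    intro n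
    induction n with
    | zero =>
      intro i hi
      refine ⟨hd0 i hi, ?_⟩
      have h1 : ve 0 ^ 2 / (2 * a_brake) - v i 0 ^ 2 / (2 * abi i) ≤ d i 0 :=
        le_trans (le_max_right _ _) (hc0 i hi)
      have hbi0 := habi0 i hi
      rw [div_sub_div _ _ (by positivity) (by positivity : (2:ℝ) * abi i ≠ 0),
        div_le_iff₀ (by positivity)] at h1
      rw [show 2 * a_brake * (d i 0 + v i 0 ^ 2 / (2 * abi i))
          = (2 * a_brake * d i 0 * (2 * abi i) + 2 * a_brake * v i 0 ^ 2) / (2 * abi i)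
          from by field_simp, le_div_iff₀ (by positivity)]
      linarith [h1]
    | succ n ih =>
      -- shared facts
      have hPi : ∀ i ∈ I, 0 ≤ d i n + v i n ^ 2 / (2 * abi i) := by
        intro i hi
        have := (ih i hi).1
        have hb := habi0 i hi
        positivity
      have hs2 : ∀ i ∈ I,
          Real.sqrt (2 * a_brake * (d i n + v i n ^ 2 / (2 * abi i))) ^ 2
            = 2 * a_brake * (d i n + v i n ^ 2 / (2 * abi i)) := by
        intro i hi
        exact Real.sq_sqrt (by have := hPi i hi; positivity)
      have hles : ∀ i ∈ I,
          ve n ≤ Real.sqrt (2 * a_brake * (d i n + v i n ^ 2 / (2 * abi i))) := by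
        intro i hi
        rw [Real.le_sqrt (hveN n) (by have := hPi i hi; positivity)]
        exact (ih i hi).2
      have hvm : ve n ≤ vmax n := by
        rw [hvmax]; exact Finset.le_inf' hI _ hles
      have han : -a_brake ≤ a n := by
        rw [ha]
        refine le_min (by linarith) ?_
        rw [le_div_iff₀ hdt]; linarith
      have hub : ve (n + 1) + a_brake * Δt ≤ vmax n := by
        have h := min_le_right a_max ((vmax n - a_brake * Δt - ve n) / Δt)
        rw [← ha n] at h
        have h2 : a n * Δt ≤ vmax n - a_brake * Δt - ve n := by
          rw [div_eq_mul_inv] at h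
          calc a n * Δt ≤ (vmax n - a_brake * Δt - ve n) * Δt⁻¹ * Δt :=
                mul_le_mul_of_nonneg_right h hdt.le
            _ = vmax n - a_brake * Δt - ve n := by field_simp
        rw [hvedyn]; linarith
      intro i hi
      have hbi0 := habi0 i hi
      have hsle : vmax n ≤ Real.sqrt (2 * a_brake * (d i n + v i n ^ 2 / (2 * abi i))) := by
        rw [hvmax]; exact Finset.inf'_le _ hi
      set s := Real.sqrt (2 * a_brake * (d i n + v i n ^ 2 / (2 * abi i))) with hsdef
      have hs2' : s ^ 2 * abi i = 2 * a_brake * d i n * abi i + a_brake * v i n ^ 2 := by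
        rw [hs2 i hi]; field_simp
      have hs0 : 0 ≤ s := Real.sqrt_nonneg _
      have hub' : ve (n + 1) + a_brake * Δt ≤ s := le_trans hub hsle
      have hus : ve n ≤ s := hles i hi
      -- distance nonnegativity via helperB
      have hDnew : 0 ≤ d i (n + 1) := by
        rw [hddyn i hi]
        exact helperB a_brake (abi i) Δt (d i n) (v i n) (v i (n+1)) (ai i n) (a n)
          (ve n) (ve (n+1)) s hab (habi i hi) hdt (ih i hi).1 (hv i hi n) (hv i hi (n+1))
          (hvdyn i hi n) (hai i hi n) (hveN n) (hveN (n+1)) (hvedyn n) hs0 hs2' hus hub'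
      refine ⟨hDnew, ?_⟩
      have hA := helperA a_brake (abi i) Δt (d i n) (v i n) (v i (n+1)) (ai i n) (a n)
        (ve n) (ve (n+1)) s hab (habi i hi) hdt (hv i hi n) (hv i hi (n+1))
        (hvdyn i hi n) (hai i hi n) han (hveN (n+1)) (hvedyn n) hs2' hub'
      rw [hddyn i hi]
      rw [show 2 * a_brake * (d i n + (v i n * Δt + 1 / 2 * ai i n * Δt ^ 2)
            - (ve n * Δt + 1 / 2 * a n * Δt ^ 2) + v i (n+1) ^ 2 / (2 * abi i))
          = (2 * a_brake * (d i n + (v i n * Δt + (1/2) * ai i n * Δt ^ 2)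
            - (ve n * Δt + (1/2) * a n * Δt ^ 2)) * abi i + a_brake * v i (n+1) ^ 2) / abi i
          from by field_simp]
      rw [le_div_iff₀ hbi0]
      linarith [hA]
  intro n i hi
  obtain ⟨h1, h2⟩ := key n i hi
  refine ⟨h1, max_le h1 ?_⟩
  have hbi0 := habi0 i hi
  rw [sub_le_iff_le_add, div_le_iff₀ (by positivity : (0:ℝ) < 2 * a_brake)]
  nlinarith [h2]
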